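/- Let t ∈ 𝕋_m, let 1 ≤ k ≤ m, and let ν_i ∈ Pr(𝕋) for i ∈ {0,…,m−1} ∖ {k−1}, with ν_i finitely supported for each i < k−1. Then the map F : Pr(𝕋) → Pr(𝕋) defined by F(ζ) = t(ν_0,…,ν_{k−2}, ζ, ν_k,…,ν_{m−1}) is continuous with respect to the weak* topology. -/

import Mathlib

open scoped Classical

/-- The free binary system (free magma) on one generator. -/
abbrev 𝕋 : Type := FreeMagma Unit

/-- The generator `1` of `𝕋`. -/
def e1 : 𝕋 := FreeMagma.of ()

/-- `#(t)`: the number of occurrences of the generator in `t`. -/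
def cnt : 𝕋 → ℕ
  | FreeMagma.of _ => 1
  | FreeMagma.mul a b => cnt a + cnt b

/-- The space `ℓ^∞(S)` of bounded real-valued functions on `S`. -/
def Bdd (S : Type*) : Type _ := {f : S → ℝ // ∃ M, ∀ s, |f s| ≤ M}

/-- Package a function as an element of `Bdd S` (junk value if unbounded). -/
noncomputable def liftBdd {S : Type*} (g : S → ℝ) : Bdd S :=
  if h : ∃ M, ∀ s, |g s| ≤ M then ⟨g, h⟩ else ⟨fun _ => 0, 0, fun _ => by simp⟩

/-- The constant function as an element of `Bdd S`. -/
def constB (S : Type*) (c : ℝ) : Bdd S := ⟨fun _ => c, |c|, fun _ => le_rfl⟩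

/-- The characteristic function of `E` as an element of `Bdd S`. -/
noncomputable def indB {S : Type*} (E : Set S) : Bdd S :=
  liftBdd (fun s => if s ∈ E then 1 else 0)

/-- `Pr S`: finitely additive probability measures on `S`, identified with the
positive normalized linear functionals on `ℓ^∞(S)`.  The weak* topology is the
subspace topology inherited from the product topology on `Bdd S → ℝ`. -/
def PrSet (S : Type*) : Set (Bdd S → ℝ) :=
  {φ | (∀ f g h : Bdd S, (∀ s, h.1 s = f.1 s + g.1 s) → φ h = φ f + φ g) ∧
       (∀ (c : ℝ) (f g : Bdd S), (∀ s, g.1 s = c * f.1 s) → φ g = c * φ f) ∧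
       (∀ f : Bdd S, (∀ s, 0 ≤ f.1 s) → 0 ≤ φ f) ∧
       φ (constB S 1) = 1}

/-- `μ(E)`: the measure of a set `E ⊆ S`. -/
noncomputable def mE {S : Type*} (φ : Bdd S → ℝ) (E : Set S) : ℝ := φ (indB E)

/-- The product `μ ⊗ ν` of finitely additive measures:
`μ⊗ν(f) = μ(x ↦ ν(y ↦ f(x,y)))`. -/
noncomputable def prodM {S T : Type*} (φ : Bdd S → ℝ) (ψ : Bdd T → ℝ) :
    Bdd (S × T) → ℝ :=
  fun f => φ (liftBdd fun x => ψ (liftBdd fun y => f.1 (x, y)))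

/-- The extension of a binary operation `op` on `S` to `Pr S`:
`μ⋆ν(f) = μ(x ↦ ν(y ↦ f(x ⋆ y)))`. -/
noncomputable def starM {S : Type*} (op : S → S → S) (φ ψ : Bdd S → ℝ) :
    Bdd S → ℝ :=
  fun f => φ (liftBdd fun x => ψ (liftBdd fun y => f.1 (op x y)))

/-- The extension of `ˆ` to `Pr 𝕋`. -/
noncomputable def hmul (φ ψ : Bdd 𝕋 → ℝ) : Bdd 𝕋 → ℝ := starM (· * ·) φ ψ

/-- Finitely supported probability measures: finite convex combinations of
point evaluations. -/
def FinSuppPr (S : Type*) : Set (Bdd S → ℝ) :=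
  {φ | ∃ (F : Finset S) (w : S → ℝ), (∀ s ∈ F, 0 ≤ w s) ∧ (∑ s ∈ F, w s) = 1 ∧
      ∀ f : Bdd S, φ f = ∑ s ∈ F, w s * f.1 s}

/-- `𝔸_n`: finitely supported probability measures concentrated on `𝕋_n`. -/
def Asets (n : ℕ) : Set (Bdd 𝕋 → ℝ) :=
  {φ | ∃ (F : Finset 𝕋) (w : 𝕋 → ℝ), (∀ t ∈ F, cnt t = n) ∧ (∀ t ∈ F, 0 ≤ w t) ∧
      (∑ t ∈ F, w t) = 1 ∧ ∀ f : Bdd 𝕋, φ f = ∑ t ∈ F, w t * f.1 t}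

/-- The extension of `+` on `ℕ` to ultrafilters: `A ∈ U+V` iff
`{m : {n : m+n ∈ A} ∈ V} ∈ U`. -/
noncomputable def addU (U V : Ultrafilter ℕ) : Ultrafilter ℕ :=
  U.bind fun m => V.map fun n => m + n

/-- `𝔸_U`: the `U`-limit of the sets `𝔸_m`. -/
def AU (U : Ultrafilter ℕ) : Set (Bdd 𝕋 → ℝ) :=
  {μ | μ ∈ PrSet 𝕋 ∧ ∀ W : Set (Bdd 𝕋 → ℝ), IsOpen W → μ ∈ W →
      {m : ℕ | (W ∩ Asets m).Nonempty} ∈ U}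

/-- The extension of `ˆ` to ultrafilters on `𝕋`: `E ∈ UˆV` iff
`{u : {v : uˆv ∈ E} ∈ V} ∈ U`. -/
noncomputable def umul (U V : Ultrafilter 𝕋) : Ultrafilter 𝕋 :=
  U.bind fun u => V.map fun v => u * v

/-- Substitution of measures into a term `t`:
`t(μ_0,…,μ_{m-1})(f)` is the nested integral
`μ_0(x_0 ↦ ⋯ μ_{m-1}(x_{m-1} ↦ f(t(x⃗)))⋯)`. -/
noncomputable def substM : 𝕋 → List (Bdd 𝕋 → ℝ) → (Bdd 𝕋 → ℝ)
  | FreeMagma.of _, μs => μs.headI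
  | FreeMagma.mul a b, μs =>
      hmul (substM a (μs.take (cnt a))) (substM b (μs.drop (cnt a)))

/-- `t_k`: iteratively remove the carets of `t` involving only leaves of index
greater than `k`. -/
def tk : 𝕋 → ℕ → 𝕋
  | FreeMagma.of _, _ => e1
  | FreeMagma.mul a b, k => if k < cnt a then tk a k * e1 else a * tk b (k - cnt a)

/-- `l_k(t) = #(t_k) - 2` (truncated subtraction). -/
def lk (t : 𝕋) (k : ℕ) : ℕ := cnt (tk t k) - 2

/-- The subterm `t/σ` of `t` at address `σ` (`false` = left/`0`, `true` = right/`1`). -/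
def subT : 𝕋 → List Bool → Option 𝕋
  | t, [] => some t
  | FreeMagma.of _, _ :: _ => none
  | FreeMagma.mul a b, c :: σ => if c then subT b σ else subT a σ

/-- `σ <_lex ς` for incompatible binary sequences: at the first coordinate where
they differ, `σ` has `0` and `ς` has `1`. -/
def lexLT (σ ς : List Bool) : Prop :=
  ∃ p σ' ς', σ = p ++ (false :: σ') ∧ ς = p ++ (true :: ς')

/-- `x₀·E`. -/
def x0E (E : Set 𝕋) : Set 𝕋 :=
  {x | ∃ a b c : 𝕋, x = a * (b * c) ∧ (a * b) * c ∈ E}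

/-- `x₁·E`. -/
def x1E (E : Set 𝕋) : Set 𝕋 :=
  {x | ∃ s a b c : 𝕋, x = s * (a * (b * c)) ∧ s * ((a * b) * c) ∈ E}

/-- `u_σ` for a nonempty finite binary sequence `σ`. -/
def uSeq : List Bool → 𝕋
  | [] => e1
  | [_] => e1
  | b :: σ => if b then e1 * uSeq σ else uSeq σ * e1

/-- `a ≪ b`: for some `p`, `#(a) < 2^p` and `2^p` divides `#(b)`. -/
def ll (a b : 𝕋) : Prop := ∃ p : ℕ, cnt a < 2 ^ p ∧ 2 ^ p ∣ cnt b

/-- `r↾n`: the first `n` values of `r` as a finite binary sequence. -/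
def rList (r : ℕ → Bool) (n : ℕ) : List Bool := (List.range n).map r

/-- The map `h_r : 𝕋 → 𝕋`. -/
noncomputable def hr (r : ℕ → Bool) : 𝕋 → 𝕋
  | FreeMagma.of _ => uSeq (rList r 1)
  | FreeMagma.mul a b =>
      if ll a b then hr r a * hr r b else uSeq (rList r (cnt a + cnt b))

/-- The action of `h_r` on measures: `h_r(μ)(f) = μ(f ∘ h_r)`. -/
noncomputable def hrM (r : ℕ → Bool) (φ : Bdd 𝕋 → ℝ) : Bdd 𝕋 → ℝ :=
  fun f => φ (liftBdd fun t => f.1 (hr r t))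

/-- `lev`: `l(1) = 0`, `l(aˆb) = l(a) + 1`. -/
def lev : 𝕋 → ℕ
  | FreeMagma.of _ => 0
  | FreeMagma.mul a _ => lev a + 1

/-- `C` is closed under `ˆ`. -/
def HClosed (C : Set (Bdd 𝕋 → ℝ)) : Prop := ∀ μ ∈ C, ∀ ν ∈ C, hmul μ ν ∈ C
section Lemmas

lemma cnt_pos (t : 𝕋) : 1 ≤ cnt t := by
  induction t with
  | of _ => simp [cnt]
  | mul a b iha ihb => simp only [cnt]; omega

lemma liftBdd_val {S : Type*} {g : S → ℝ} (h : ∃ M, ∀ s, |g s| ≤ M) :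
    (liftBdd g).1 = g := by
  unfold liftBdd; exact congrArg Subtype.val (dif_pos h)

lemma pr_const {φ : Bdd 𝕋 → ℝ} (hφ : φ ∈ PrSet 𝕋) (c : ℝ) :
    φ (constB 𝕋 c) = c := by
  rw [hφ.2.1 c (constB 𝕋 1) (constB 𝕋 c) (fun s => by simp [constB]), hφ.2.2.2, mul_one]

lemma pr_bound {φ : Bdd 𝕋 → ℝ} (hφ : φ ∈ PrSet 𝕋) {g : Bdd 𝕋} {M : ℝ}
    (h : ∀ s, |g.1 s| ≤ M) : |φ g| ≤ M := by
  have hM : 0 ≤ M := le_trans (abs_nonneg _) (h e1)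
  have hb1 : ∃ B, ∀ s, |M - g.1 s| ≤ B :=
    ⟨M + M, fun s => by have := abs_le.1 (h s); rw [abs_le]; constructor <;> linarith⟩
  have hb2 : ∃ B, ∀ s, |g.1 s + M| ≤ B :=
    ⟨M + M, fun s => by have := abs_le.1 (h s); rw [abs_le]; constructor <;> linarith⟩
  have e1' : φ (constB 𝕋 M) = φ g + φ (liftBdd fun s => M - g.1 s) := by
    apply hφ.1
    intro s
    rw [liftBdd_val hb1]
    simp [constB]
  have e2' : φ (liftBdd fun s => g.1 s + M) = φ g + φ (constB 𝕋 M) := by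
    apply hφ.1
    intro s
    rw [liftBdd_val hb2]
    simp [constB]
  have p1 : 0 ≤ φ (liftBdd fun s => M - g.1 s) := by
    apply hφ.2.2.1
    intro s
    rw [liftBdd_val hb1]
    dsimp only
    have := abs_le.1 (h s); linarith
  have p2 : 0 ≤ φ (liftBdd fun s => g.1 s + M) := by
    apply hφ.2.2.1
    intro s
    rw [liftBdd_val hb2]
    dsimp only
    have := abs_le.1 (h s); linarith
  rw [pr_const hφ] at e1' e2'
  rw [abs_le]; constructor <;> linarith

lemma inner_bdd_val (f : Bdd 𝕋) (x : 𝕋) :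
    (liftBdd fun y => f.1 (x * y)).1 = fun y => f.1 (x * y) := by
  obtain ⟨M, hM⟩ := f.2
  exact liftBdd_val ⟨M, fun y => hM _⟩

lemma inner_bdd {ψ : Bdd 𝕋 → ℝ} (hψ : ψ ∈ PrSet 𝕋) (f : Bdd 𝕋) {M : ℝ}
    (hM : ∀ s, |f.1 s| ≤ M) (x : 𝕋) :
    |ψ (liftBdd fun y => f.1 (x * y))| ≤ M := by
  apply pr_bound hψ
  intro s
  rw [inner_bdd_val]
  exact hM _

lemma inner_bdd' {ψ : Bdd 𝕋 → ℝ} (hψ : ψ ∈ PrSet 𝕋) (f : Bdd 𝕋) :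
    ∃ M, ∀ x, |ψ (liftBdd fun y => f.1 (x * y))| ≤ M := by
  obtain ⟨M, hM⟩ := f.2
  exact ⟨M, fun x => inner_bdd hψ f hM x⟩

lemma outer_bdd_val {ψ : Bdd 𝕋 → ℝ} (hψ : ψ ∈ PrSet 𝕋) (f : Bdd 𝕋) :
    (liftBdd fun x => ψ (liftBdd fun y => f.1 (x * y))).1
      = fun x => ψ (liftBdd fun y => f.1 (x * y)) :=
  liftBdd_val (inner_bdd' hψ f)

lemma hmul_def (φ ψ : Bdd 𝕋 → ℝ) (f : Bdd 𝕋) :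
    hmul φ ψ f = φ (liftBdd fun x => ψ (liftBdd fun y => f.1 (x * y))) := rfl

lemma hmul_mem_PrSet {φ ψ : Bdd 𝕋 → ℝ} (hφ : φ ∈ PrSet 𝕋) (hψ : ψ ∈ PrSet 𝕋) :
    hmul φ ψ ∈ PrSet 𝕋 := by
  refine ⟨?_, ?_, ?_, ?_⟩
  · intro f g h hfgh
    rw [hmul_def, hmul_def, hmul_def]
    apply hφ.1
    intro x
    rw [outer_bdd_val hψ, outer_bdd_val hψ, outer_bdd_val hψ]
    apply hψ.1
    intro y
    rw [inner_bdd_val, inner_bdd_val, inner_bdd_val]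
    exact hfgh _
  · intro c f g hfg
    rw [hmul_def, hmul_def]
    apply hφ.2.1
    intro x
    rw [outer_bdd_val hψ, outer_bdd_val hψ]
    dsimp only
    apply hψ.2.1
    intro y
    rw [inner_bdd_val, inner_bdd_val]
    exact hfg _
  · intro f hf
    rw [hmul_def]
    apply hφ.2.2.1
    intro x
    rw [outer_bdd_val hψ]
    apply hψ.2.2.1
    intro y
    rw [inner_bdd_val]
    exact hf _
  · rw [hmul_def]
    have inner1 : ∀ x : 𝕋,
        ψ (liftBdd fun y => (constB 𝕋 1).1 (x * y)) = 1 := by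
      intro x
      rw [hψ.2.1 1 (constB 𝕋 1) _ (fun s => by rw [inner_bdd_val]; simp [constB]),
        hψ.2.2.2, mul_one]
    rw [hφ.2.1 1 (constB 𝕋 1) _
      (fun s => by rw [outer_bdd_val hψ]; dsimp only; rw [inner1]; simp [constB]), hφ.2.2.2, mul_one]

lemma hmul_mem_FinSupp {φ ψ : Bdd 𝕋 → ℝ} (hφ : φ ∈ FinSuppPr 𝕋)
    (hψ : ψ ∈ FinSuppPr 𝕋) : hmul φ ψ ∈ FinSuppPr 𝕋 := by
  obtain ⟨F, w, hw0, hw1, hev⟩ := hφ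
  obtain ⟨G, v, hv0, hv1, gev⟩ := hψ
  refine ⟨(F ×ˢ G).image fun p => p.1 * p.2,
    fun u => ∑ p ∈ (F ×ˢ G).filter fun p => p.1 * p.2 = u, w p.1 * v p.2, ?_, ?_, ?_⟩
  · intro u _
    apply Finset.sum_nonneg
    intro p hp
    rw [Finset.mem_filter, Finset.mem_product] at hp
    exact mul_nonneg (hw0 _ hp.1.1) (hv0 _ hp.1.2)
  · rw [Finset.sum_fiberwise_of_maps_to (fun p hp => Finset.mem_image_of_mem _ hp)]
    rw [Finset.sum_product]
    calc ∑ s ∈ F, ∑ t ∈ G, w s * v t = ∑ s ∈ F, w s := by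
          refine Finset.sum_congr rfl fun s _ => ?_
          rw [← Finset.mul_sum, hv1, mul_one]
      _ = 1 := hw1
  · intro f
    obtain ⟨M, hM⟩ := f.2
    have innerval : ∀ x : 𝕋, (liftBdd fun y => f.1 (x * y)).1 = fun y => f.1 (x * y) :=
      fun x => liftBdd_val ⟨M, fun y => hM _⟩
    have inner_eq : ∀ x : 𝕋, ψ (liftBdd fun y => f.1 (x * y)) = ∑ t ∈ G, v t * f.1 (x * t) := by
      intro x
      rw [gev, innerval]
    have hbd : ∃ B, ∀ x, |ψ (liftBdd fun y => f.1 (x * y))| ≤ B := by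
      refine ⟨∑ t ∈ G, |v t| * M, fun x => ?_⟩
      rw [inner_eq]
      refine le_trans (Finset.abs_sum_le_sum_abs _ _) (Finset.sum_le_sum fun t _ => ?_)
      rw [abs_mul]
      exact mul_le_mul_of_nonneg_left (hM _) (abs_nonneg _)
    rw [hmul_def, hev, liftBdd_val hbd]
    calc ∑ s ∈ F, w s * ψ (liftBdd fun y => f.1 (s * y))
        = ∑ p ∈ F ×ˢ G, w p.1 * v p.2 * f.1 (p.1 * p.2) := by
          rw [Finset.sum_product]
          refine Finset.sum_congr rfl fun s _ => ?_
          rw [inner_eq, Finset.mul_sum]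
          refine Finset.sum_congr rfl fun t _ => by ring
      _ = ∑ u ∈ (F ×ˢ G).image (fun p => p.1 * p.2),
            (∑ p ∈ (F ×ˢ G).filter fun p => p.1 * p.2 = u, w p.1 * v p.2) * f.1 u := by
          have key := Finset.sum_fiberwise_of_maps_to (s := F ×ˢ G)
            (t := (F ×ˢ G).image fun p => p.1 * p.2) (g := fun p => p.1 * p.2)
            (fun p hp => Finset.mem_image_of_mem _ hp)
            (fun p => w p.1 * v p.2 * f.1 (p.1 * p.2))
          rw [← key]
          refine Finset.sum_congr rfl fun u _ => ?_
          rw [Finset.sum_mul]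
          refine Finset.sum_congr rfl fun p hp => ?_
          rw [Finset.mem_filter] at hp
          rw [hp.2]

lemma substM_mem_PrSet : ∀ (t : 𝕋) (μs : List (Bdd 𝕋 → ℝ)), cnt t ≤ μs.length →
    (∀ μ ∈ μs, μ ∈ PrSet 𝕋) → substM t μs ∈ PrSet 𝕋 := by
  intro t
  induction t with
  | of u =>
    intro μs hlen hmem
    cases μs with
    | nil => simp [cnt] at hlen
    | cons a l => exact hmem a (by simp)
  | mul a b iha ihb =>
    intro μs hlen hmem
    simp only [cnt] at hlen
    simp only [substM]
    have h1 := cnt_pos a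
    have h2 := cnt_pos b
    refine hmul_mem_PrSet (iha _ ?_ fun μ hμ => hmem μ (List.mem_of_mem_take hμ))
      (ihb _ ?_ fun μ hμ => hmem μ (List.mem_of_mem_drop hμ))
    · rw [List.length_take]; omega
    · rw [List.length_drop]; omega

lemma substM_mem_FinSupp : ∀ (t : 𝕋) (μs : List (Bdd 𝕋 → ℝ)), cnt t ≤ μs.length →
    (∀ μ ∈ μs, μ ∈ FinSuppPr 𝕋) → substM t μs ∈ FinSuppPr 𝕋 := by
  intro t
  induction t with
  | of u =>
    intro μs hlen hmem
    cases μs with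
    | nil => simp [cnt] at hlen
    | cons a l => exact hmem a (by simp)
  | mul a b iha ihb =>
    intro μs hlen hmem
    simp only [cnt] at hlen
    simp only [substM]
    have h1 := cnt_pos a
    have h2 := cnt_pos b
    refine hmul_mem_FinSupp (iha _ ?_ fun μ hμ => hmem μ (List.mem_of_mem_take hμ))
      (ihb _ ?_ fun μ hμ => hmem μ (List.mem_of_mem_drop hμ))
    · rw [List.length_take]; omega
    · rw [List.length_drop]; omega

lemma take_map_range {α : Type*} (g : ℕ → α) (p q : ℕ) :
    ((List.range (p + q)).map g).take p = (List.range p).map g := by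
  rw [List.range_add, List.map_append]
  exact List.take_left' (by simp)

lemma drop_map_range {α : Type*} (g : ℕ → α) (p q : ℕ) :
    ((List.range (p + q)).map g).drop p = (List.range q).map fun j => g (p + j) := by
  rw [List.range_add, List.map_append]
  rw [List.drop_left' (by simp)]
  rw [List.map_map]
  rfl

lemma main_cont : ∀ (t : 𝕋) (k : ℕ), k < cnt t → ∀ (ν : ℕ → Bdd 𝕋 → ℝ),
    (∀ i < cnt t, i ≠ k → ν i ∈ PrSet 𝕋) → (∀ i < k, ν i ∈ FinSuppPr 𝕋) →
    ∀ f : Bdd 𝕋, ContinuousOn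
      (fun ζ => substM t ((List.range (cnt t)).map fun i => if i = k then ζ else ν i) f)
      (PrSet 𝕋) := by
  intro t
  induction t with
  | of u =>
    intro k hk ν hν hfs f
    have hk0 : k = 0 := by
      have : cnt (FreeMagma.of u) = 1 := rfl
      omega
    subst hk0
    have heq : ∀ ζ : Bdd 𝕋 → ℝ,
        substM (FreeMagma.of u) ((List.range (cnt (FreeMagma.of u))).map
          fun i => if i = 0 then ζ else ν i) f = ζ f := by
      intro ζ
      have : cnt (FreeMagma.of u) = 1 := rfl
      rw [this, show List.range 1 = [0] from rfl]
      simp [substM]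
    simp only [heq]
    exact (continuous_apply f).continuousOn
  | mul a b iha ihb =>
    intro k hk ν hν hfs f
    have hct : cnt (FreeMagma.mul a b) = cnt a + cnt b := rfl
    rw [hct] at hk
    have hsub : ∀ ζ : Bdd 𝕋 → ℝ,
        substM (FreeMagma.mul a b) ((List.range (cnt (FreeMagma.mul a b))).map
          fun i => if i = k then ζ else ν i) f
          = hmul (substM a ((List.range (cnt a)).map fun i => if i = k then ζ else ν i))
              (substM b ((List.range (cnt b)).map fun j =>
                if cnt a + j = k then ζ else ν (cnt a + j))) f := by
      intro ζ
      rw [hct]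
      simp only [substM, take_map_range, drop_map_range]
    simp only [hsub]
    by_cases hkp : k < cnt a
    · -- ζ sits in the left subterm
      have hdrop : (fun j => if cnt a + j = k then (0 : Bdd 𝕋 → ℝ) else ν (cnt a + j))
          = fun j => ν (cnt a + j) := funext fun j => if_neg (by omega)
      have hdrop' : ∀ ζ : Bdd 𝕋 → ℝ, (fun j => if cnt a + j = k then ζ else ν (cnt a + j))
          = fun j => ν (cnt a + j) := fun ζ => funext fun j => if_neg (by omega)
      simp only [hdrop']
      set ψ := substM b ((List.range (cnt b)).map fun j => ν (cnt a + j)) with hψdef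
      have hψ : ψ ∈ PrSet 𝕋 := by
        apply substM_mem_PrSet
        · simp
        · intro μ hμ
          simp only [List.mem_map, List.mem_range] at hμ
          obtain ⟨j, hj, rfl⟩ := hμ
          exact hν (cnt a + j) (by omega) (by omega)
      have heq : ∀ ζ : Bdd 𝕋 → ℝ,
          hmul (substM a ((List.range (cnt a)).map fun i => if i = k then ζ else ν i)) ψ f
          = substM a ((List.range (cnt a)).map fun i => if i = k then ζ else ν i)
              (liftBdd fun x => ψ (liftBdd fun y => f.1 (x * y))) := fun ζ => rfl
      simp only [heq]
      exact iha k hkp ν (fun i hi hne => hν i (by omega) hne) hfs _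
    · -- ζ sits in the right subterm
      push_neg at hkp
      have htake : ∀ ζ : Bdd 𝕋 → ℝ,
          (List.range (cnt a)).map (fun i => if i = k then ζ else ν i)
            = (List.range (cnt a)).map ν := by
        intro ζ
        refine List.map_congr_left fun i hi => ?_
        rw [List.mem_range] at hi
        exact if_neg (by omega)
      have hdropfun : ∀ ζ : Bdd 𝕋 → ℝ,
          (fun j => if cnt a + j = k then ζ else ν (cnt a + j))
            = fun j => if j = k - cnt a then ζ else ν (cnt a + j) := by
        intro ζ
        funext j
        by_cases hj : j = k - cnt a
        · rw [if_pos hj, if_pos (by omega)]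
        · rw [if_neg (by omega), if_neg hj]
      simp only [htake, hdropfun]
      have hφ : substM a ((List.range (cnt a)).map ν) ∈ FinSuppPr 𝕋 := by
        apply substM_mem_FinSupp
        · simp
        · intro μ hμ
          simp only [List.mem_map, List.mem_range] at hμ
          obtain ⟨i, hi, rfl⟩ := hμ
          exact hfs i (by omega)
      obtain ⟨F, w, hw0, hw1, hev⟩ := hφ
      have hψ : ∀ ζ ∈ PrSet 𝕋,
          substM b ((List.range (cnt b)).map fun j => if j = k - cnt a then ζ
            else ν (cnt a + j)) ∈ PrSet 𝕋 := by
        intro ζ hζ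
        apply substM_mem_PrSet
        · simp
        · intro μ hμ
          simp only [List.mem_map, List.mem_range] at hμ
          obtain ⟨j, hj, rfl⟩ := hμ
          by_cases hjk : j = k - cnt a
          · rw [if_pos hjk]; exact hζ
          · rw [if_neg hjk]
            exact hν (cnt a + j) (by omega) (by omega)
      have hcont : ContinuousOn (fun ζ : Bdd 𝕋 → ℝ => ∑ s ∈ F, w s *
          substM b ((List.range (cnt b)).map fun j => if j = k - cnt a then ζ
            else ν (cnt a + j)) (liftBdd fun y => f.1 (s * y))) (PrSet 𝕋) := by
        refine continuousOn_finset_sum _ fun s _ => continuousOn_const.mul ?_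
        exact ihb (k - cnt a) (by omega) (fun j => ν (cnt a + j))
          (fun i hi hne => hν (cnt a + i) (by omega) (by omega))
          (fun i hi => hfs (cnt a + i) (by omega)) (liftBdd fun y => f.1 (s * y))
      refine ContinuousOn.congr hcont ?_
      intro ζ hζ
      dsimp only
      rw [hmul_def, hev, outer_bdd_val (hψ ζ hζ) f]

end Lemmas
/-- Claim 4.2: substitution into `t` is weak*-continuous in the
`(k-1)`-st coordinate, provided the earlier coordinates are finitely supported. -/
theorem subst_continuous (m : ℕ) (t : 𝕋) (ht : cnt t = m) (k : ℕ)
    (hk1 : 1 ≤ k) (hkm : k ≤ m) (ν : ℕ → (Bdd 𝕋 → ℝ))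
    (hν : ∀ i < m, i ≠ k - 1 → ν i ∈ PrSet 𝕋)
    (hfs : ∀ i < k - 1, ν i ∈ FinSuppPr 𝕋) :
    ContinuousOn
      (fun ζ : Bdd 𝕋 → ℝ =>
        substM t ((List.range m).map fun i => if i = k - 1 then ζ else ν i))
      (PrSet 𝕋) := by
  subst ht
  rw [continuousOn_pi]
  intro f
  exact main_cont t (k - 1) (by omega) ν hν hfs f
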